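/- Let P be a finite set of points in the plane ℝ² that is not contained in a single line, let G be the point visibility graph of P, and let δ be the minimum vertex degree of G. Then G has a dominating set of size at most ⌊δ/2⌋ + 1. -/

import Mathlib

/-- Two points `p q` are visible to each other with respect to the point set `P`
if they are distinct and no point of `P` lies in the open segment between them. -/
def Visible (P : Finset (ℝ × ℝ)) (p q : ℝ × ℝ) : Prop :=
  p ≠ q ∧ ∀ r ∈ P, r ∉ openSegment ℝ p q

/-- The point visibility graph of a finite point set `P` in the plane. -/
def PVG (P : Finset (ℝ × ℝ)) : SimpleGraph {x : ℝ × ℝ // x ∈ P} where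
  Adj u v := Visible P u.1 v.1
  symm := by
    constructor
    rintro u v ⟨hne, h⟩
    exact ⟨hne.symm, fun r hr hmem => h r hr (by rwa [openSegment_symm] at hmem)⟩
  loopless := by constructor; rintro u ⟨hne, -⟩; exact hne rfl


open Complex

noncomputable section
namespace Stmt14

/-- embed ℝ×ℝ into ℂ -/
def zc (w : ℝ × ℝ) : ℂ := ↑w.1 + ↑w.2 * I

lemma zc_inj : Function.Injective zc := by
  intro a b h
  have h1 : (zc a).re = (zc b).re := by rw [h]
  have h2 : (zc a).im = (zc b).im := by rw [h]
  simp [zc] at h1 h2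
  exact Prod.ext h1 h2

lemma zc_smul_add (t : ℝ) (p q : ℝ × ℝ) : zc (p + t • (q - p)) = zc p + t • (zc q - zc p) := by
  simp [zc, Prod.smul_def, Complex.real_smul]
  ring

/-- the affine coordinate map -/
def Tm (u : ℝ × ℝ) (ζ : ℂ) (w : ℝ × ℝ) : ℂ := (zc w - zc u) * ζ

variable {u : ℝ × ℝ} {ζ : ℂ}

lemma Tm_inj (hζ : ζ ≠ 0) : Function.Injective (Tm u ζ) := by
  intro a b h
  exact zc_inj (by have := mul_right_cancel₀ hζ h; linear_combination this)

lemma Tm_affine (t : ℝ) (p q : ℝ × ℝ) :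
    Tm u ζ (p + t • (q - p)) = Tm u ζ p + t • (Tm u ζ q - Tm u ζ p) := by
  simp only [Tm, zc_smul_add, Complex.real_smul]
  ring

lemma Tm_seg (hζ : ζ ≠ 0) (p q r : ℝ × ℝ) :
    r ∈ openSegment ℝ p q ↔ Tm u ζ r ∈ openSegment ℝ (Tm u ζ p) (Tm u ζ q) := by
  rw [openSegment_eq_image' ℝ p q, openSegment_eq_image' ℝ (Tm u ζ p) (Tm u ζ q)]
  constructor
  · rintro ⟨t, ht, rfl⟩
    exact ⟨t, ht, (Tm_affine t p q).symm⟩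
  · rintro ⟨t, ht, hr⟩
    refine ⟨t, ht, Tm_inj (u := u) hζ ?_⟩
    rw [Tm_affine t p q]
    exact hr

lemma Tm_self : Tm u ζ u = 0 := by simp [Tm]

/-- visibility transported -/
lemma visible_iff (P : Finset (ℝ × ℝ)) (hζ : ζ ≠ 0) (p q : ℝ × ℝ) :
    Visible P p q ↔ (Tm u ζ p ≠ Tm u ζ q ∧ ∀ r ∈ P, Tm u ζ r ∉ openSegment ℝ (Tm u ζ p) (Tm u ζ q)) := by
  constructor
  · rintro ⟨hne, h⟩
    exact ⟨fun hc => hne (Tm_inj hζ hc), fun r hr hm => h r hr ((Tm_seg hζ p q r).2 hm)⟩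
  · rintro ⟨hne, h⟩
    exact ⟨fun hc => hne (by rw [hc]), fun r hr hm => h r hr ((Tm_seg hζ p q r).1 hm)⟩


/-- planar cross product in complex coordinates -/
def cr (x y : ℂ) : ℝ := ((starRingEnd ℂ) x * y).im

lemma cr_self (x : ℂ) : cr x x = 0 := by
  have : (starRingEnd ℂ) x * x = ↑(Complex.normSq x) := by
    rw [mul_comm]; exact Complex.mul_conj x
  simp [cr, this]

lemma cr_add_right (x y z : ℂ) : cr x (y + z) = cr x y + cr x z := by
  simp [cr, mul_add]

lemma cr_smul_right (x : ℂ) (t : ℝ) (y : ℂ) : cr x (t • y) = t * cr x y := by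
  simp [cr, Complex.real_smul, Complex.mul_im]
  ring

lemma cr_add_left (x y z : ℂ) : cr (x + y) z = cr x z + cr y z := by
  simp [cr, add_mul]

lemma cr_smul_left (t : ℝ) (x y : ℂ) : cr (t • x) y = t * cr x y := by
  simp [cr, Complex.real_smul, Complex.mul_im]
  ring

/-- polar formula for the cross product -/
lemma cr_formula (x y : ℂ) :
    cr x y = ‖x‖ * ‖y‖ * Real.sin (Complex.arg y - Complex.arg x) := by
  set a := Complex.arg x with ha
  set b := Complex.arg y with hb
  set R := ‖x‖ with hR
  set S := ‖y‖ with hS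
  have hx' : (↑R : ℂ) * Complex.exp (↑a * I) = x := Complex.norm_mul_exp_arg_mul_I x
  have hy' : (↑S : ℂ) * Complex.exp (↑b * I) = y := Complex.norm_mul_exp_arg_mul_I y
  have key : (starRingEnd ℂ) x * y
      = ↑(R * S * (Real.cos a * Real.cos b + Real.sin a * Real.sin b))
        + ↑(R * S * (Real.cos a * Real.sin b - Real.sin a * Real.cos b)) * I := by
    rw [← hx', ← hy', Complex.exp_mul_I, Complex.exp_mul_I]
    simp only [map_mul, map_add, Complex.conj_ofReal, Complex.conj_I,
      ← Complex.ofReal_cos, ← Complex.ofReal_sin]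
    push_cast
    ring_nf
    rw [Complex.I_sq]
    ring
  unfold cr
  rw [key]
  simp only [Complex.add_im, Complex.ofReal_im, Complex.mul_im, Complex.ofReal_re,
    Complex.I_im, Complex.I_re, Real.sin_sub]
  ring

/-- sine sign helpers -/
lemma sin_pos_imp_lt_pi {θ : ℝ} (h2 : θ < 2 * Real.pi) (hs : 0 < Real.sin θ) :
    θ < Real.pi := by
  by_contra h
  push_neg at h
  have h1 : Real.sin (θ - Real.pi) = -Real.sin θ := Real.sin_sub_pi θ
  have h3 : 0 ≤ Real.sin (θ - Real.pi) :=
    Real.sin_nonneg_of_nonneg_of_le_pi (by linarith) (by linarith)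
  linarith

lemma sin_pos_imp_lt_neg_pi {θ : ℝ} (h0 : θ ≤ 0) (hs : 0 < Real.sin θ) :
    θ < -Real.pi := by
  by_contra h
  push_neg at h
  have h3 : 0 ≤ Real.sin (-θ) := Real.sin_nonneg_of_nonneg_of_le_pi (by linarith) (by linarith)
  rw [Real.sin_neg] at h3
  linarith

/-! ### Fibers (rays) and closest points -/

variable (P : Finset (ℝ × ℝ)) (u : ℝ × ℝ) (ζ : ℂ)

def fib (a : ℝ) : Finset ℂ := ((P.image (Tm u ζ)).erase 0).filter (fun z => z.arg = a)

def Aargs : Finset ℝ := ((P.image (Tm u ζ)).erase 0).image Complex.arg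

def cpt (a : ℝ) : ℂ :=
  if h : (fib P u ζ a).Nonempty then
    (Finset.exists_min_image (fib P u ζ a) (fun z : ℂ => ‖z‖) h).choose
  else 0

variable {P u ζ}

lemma mem_fib {a : ℝ} {z : ℂ} :
    z ∈ fib P u ζ a ↔ (∃ p ∈ P, Tm u ζ p = z) ∧ z ≠ 0 ∧ z.arg = a := by
  simp only [fib, Finset.mem_filter, Finset.mem_erase, Finset.mem_image]
  tauto

lemma fib_abs_pos {a : ℝ} {z : ℂ} (h : z ∈ fib P u ζ a) : 0 < ‖z‖ := by
  have := (mem_fib.1 h).2.1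
  simpa [norm_pos_iff] using this

lemma fib_polar {a : ℝ} {z : ℂ} (h : z ∈ fib P u ζ a) :
    z = ↑(‖z‖) * Complex.exp (↑a * I) := by
  have ha := (mem_fib.1 h).2.2
  conv_lhs => rw [← Complex.norm_mul_exp_arg_mul_I z]
  rw [ha]

lemma fib_eq_of_abs_eq {a : ℝ} {z z' : ℂ} (hz : z ∈ fib P u ζ a) (hz' : z' ∈ fib P u ζ a)
    (habs : ‖z‖ = ‖z'‖) : z = z' := by
  rw [fib_polar hz, fib_polar hz', habs]

lemma fib_nonempty_of_mem {a : ℝ} (ha : a ∈ Aargs P u ζ) : (fib P u ζ a).Nonempty := by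
  rw [Aargs, Finset.mem_image] at ha
  obtain ⟨z, hz, rfl⟩ := ha
  exact ⟨z, by simp [fib, Finset.mem_filter, hz]⟩

lemma cpt_spec {a : ℝ} (ha : (fib P u ζ a).Nonempty) :
    cpt P u ζ a ∈ fib P u ζ a ∧ ∀ z ∈ fib P u ζ a, ‖cpt P u ζ a‖ ≤ ‖z‖ := by
  rw [cpt, dif_pos ha]
  obtain ⟨h1, h2⟩ := (Finset.exists_min_image (fib P u ζ a) (fun z : ℂ => ‖z‖) ha).choose_spec
  exact ⟨h1, h2⟩

/-! ### Visibility from the base point -/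

lemma vis_from_u_iff (hζ : ζ ≠ 0) (hu : u ∈ P) {p : ℝ × ℝ} (hp : p ∈ P)
    (hp0 : Tm u ζ p ≠ 0) :
    Visible P u p ↔ Tm u ζ p = cpt P u ζ ((Tm u ζ p).arg) := by
  set a := (Tm u ζ p).arg with haa
  have hfib : Tm u ζ p ∈ fib P u ζ a := mem_fib.2 ⟨⟨p, hp, rfl⟩, hp0, rfl⟩
  have hne : (fib P u ζ a).Nonempty := ⟨_, hfib⟩
  obtain ⟨hcmem, hmin⟩ := cpt_spec hne
  set c := cpt P u ζ a with hc
  have hcabs : 0 < ‖c‖ := fib_abs_pos hcmem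
  have hpabs : 0 < ‖Tm u ζ p‖ := fib_abs_pos hfib
  constructor
  · intro hv
    by_contra hne'
    -- c is a blocker
    have hlt : ‖c‖ < ‖Tm u ζ p‖ :=
      lt_of_le_of_ne (hmin _ hfib) (fun h => hne' (fib_eq_of_abs_eq hfib hcmem h.symm))
    obtain ⟨r, hrP, hr⟩ := (mem_fib.1 hcmem).1
    have hseg : Tm u ζ r ∈ openSegment ℝ (Tm u ζ u) (Tm u ζ p) := by
      rw [openSegment_eq_image' ℝ]
      refine ⟨‖c‖ / ‖Tm u ζ p‖, ⟨by positivity, by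
        rw [div_lt_one hpabs]; exact hlt⟩, ?_⟩
      rw [Tm_self, hr]
      simp only [zero_add, sub_zero]
      rw [Complex.real_smul]
      rw [fib_polar hcmem]
      conv_lhs => rw [fib_polar hfib]
      rw [← mul_assoc, ← Complex.ofReal_mul]
      congr 2
      simp only [norm_mul, Complex.norm_exp_ofReal_mul_I, Complex.norm_real, Real.norm_eq_abs, abs_norm]
      field_simp
    exact (visible_iff P hζ u p).1 hv |>.2 r hrP hseg
  · intro heq
    rw [visible_iff P hζ u p]
    refine ⟨by rw [Tm_self]; exact fun h => hp0 h.symm, fun r hrP hseg => ?_⟩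
    rw [openSegment_eq_image' ℝ, Tm_self] at hseg
    obtain ⟨t, ⟨ht0, ht1⟩, hr⟩ := hseg
    simp only [zero_add, sub_zero] at hr
    have hr0 : Tm u ζ r ≠ 0 := by
      rw [← hr, Complex.real_smul]
      exact mul_ne_zero (by exact_mod_cast ne_of_gt ht0) hp0
    have harg : (Tm u ζ r).arg = a := by
      rw [← hr, Complex.real_smul, Complex.arg_real_mul _ ht0]
    have hrfib : Tm u ζ r ∈ fib P u ζ a := mem_fib.2 ⟨⟨r, hrP, rfl⟩, hr0, harg⟩
    have h1 : ‖c‖ ≤ ‖Tm u ζ r‖ := hmin _ hrfib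
    have h2 : ‖Tm u ζ r‖ = t * ‖Tm u ζ p‖ := by
      rw [← hr, Complex.real_smul, norm_mul, Complex.norm_real, Real.norm_eq_abs, abs_of_pos ht0]
    rw [← heq] at h1
    nlinarith

lemma cr_zero_right (x : ℂ) : cr x 0 = 0 := by simp [cr]

lemma cr_sub_right (x y z : ℂ) : cr x (y - z) = cr x y - cr x z := by
  simp [cr, mul_sub]

lemma cr_sub_left (x y z : ℂ) : cr (x - y) z = cr x z - cr y z := by
  simp [cr, sub_mul]

/-! ### The wedge lemma: points on consecutive rays see each other -/

lemma wedge (hζ : ζ ≠ 0) {p q : ℝ × ℝ} (hp : p ∈ P) (hq : q ∈ P)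
    (hp0 : Tm u ζ p ≠ 0) (hq0 : Tm u ζ q ≠ 0)
    (hab : (Tm u ζ p).arg < (Tm u ζ q).arg)
    (hgap : (Tm u ζ q).arg - (Tm u ζ p).arg < Real.pi)
    (hbetween : ∀ r ∈ P, Tm u ζ r ≠ 0 →
      ¬((Tm u ζ p).arg < (Tm u ζ r).arg ∧ (Tm u ζ r).arg < (Tm u ζ q).arg)) :
    Visible P p q := by
  set x := Tm u ζ p with hx
  set y := Tm u ζ q with hy
  set α := x.arg with hα
  set β := y.arg with hβ
  have hxabs : 0 < ‖x‖ := by simpa [norm_pos_iff] using hp0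
  have hyabs : 0 < ‖y‖ := by simpa [norm_pos_iff] using hq0
  have hsin : 0 < Real.sin (β - α) := Real.sin_pos_of_pos_of_lt_pi (by linarith) hgap
  have hcrxy : 0 < cr x y := by
    rw [cr_formula]
    positivity
  rw [visible_iff (u := u) P hζ p q]
  refine ⟨fun h => absurd hab (by simp only [hα, hβ, hx, hy, h]; exact lt_irrefl _), fun r hrP hseg => ?_⟩
  rw [openSegment_eq_image' ℝ] at hseg
  obtain ⟨t, ⟨ht0, ht1⟩, hr⟩ := hseg
  set w := Tm u ζ r with hw
  have hr' : w = x + t • (y - x) := hr.symm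
  have hcr1 : cr x w = t * cr x y := by
    rw [hr', cr_add_right, cr_smul_right, cr_sub_right, cr_self]
    ring
  have hcr2 : cr w y = (1 - t) * cr x y := by
    rw [hr', cr_add_left, cr_smul_left, cr_sub_left, cr_self]
    ring
  have hw0 : w ≠ 0 := by
    intro h0
    rw [h0, cr_zero_right] at hcr1
    nlinarith
  set γ := w.arg with hγ
  have hwabs : 0 < ‖w‖ := by simpa [norm_pos_iff] using hw0
  have hsin1 : 0 < Real.sin (γ - α) := by
    have h1 : 0 < ‖x‖ * ‖w‖ * Real.sin (γ - α) := by
      rw [← cr_formula, hcr1]; nlinarith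
    by_contra hns
    push_neg at hns
    nlinarith [mul_pos hxabs hwabs]
  have hsin2 : 0 < Real.sin (β - γ) := by
    have h2 : 0 < ‖w‖ * ‖y‖ * Real.sin (β - γ) := by
      rw [← cr_formula, hcr2]; nlinarith
    by_contra hns
    push_neg at hns
    nlinarith [mul_pos hwabs hyabs]
  have hnb := hbetween r hrP hw0
  push_neg at hnb
  -- arg bounds
  have hαb : -Real.pi < α := Complex.neg_pi_lt_arg x
  have hβb : β ≤ Real.pi := Complex.arg_le_pi y
  have hγb1 : -Real.pi < γ := Complex.neg_pi_lt_arg w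
  have hγb2 : γ ≤ Real.pi := Complex.arg_le_pi w
  rcases le_or_gt γ α with hcase | hcase
  · have h1 : γ - α < -Real.pi := sin_pos_imp_lt_neg_pi (by linarith) hsin1
    have h2 : β - γ < Real.pi := sin_pos_imp_lt_pi (by linarith) hsin2
    linarith
  · have hge : β ≤ γ := hnb hcase
    have h1 : β - γ < -Real.pi := sin_pos_imp_lt_neg_pi (by linarith) hsin2
    have h2 : γ - α < Real.pi := sin_pos_imp_lt_pi (by linarith) hsin1
    linarith

/-! ### Collinearity helper -/

lemma zc_smul_add' (r : ℝ) (v w : ℝ × ℝ) : zc (r • v + w) = ↑r * zc v + zc w := by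
  simp [zc, Prod.smul_def, Complex.real_smul]
  ring

lemma collinear_of_dir (hu : u ∈ P) (hζ : ζ ≠ 0) (c₀ : ℂ)
    (h : ∀ p ∈ P, ∃ r : ℝ, Tm u ζ p = ↑r * c₀) : Collinear ℝ (P : Set (ℝ × ℝ)) := by
  rw [collinear_iff_of_mem (show u ∈ (P : Set (ℝ × ℝ)) from hu)]
  refine ⟨((c₀ * ζ⁻¹).re, (c₀ * ζ⁻¹).im), fun p hp => ?_⟩
  obtain ⟨r, hr⟩ := h p hp
  refine ⟨r, ?_⟩
  apply zc_inj
  have hv : zc ((c₀ * ζ⁻¹).re, (c₀ * ζ⁻¹).im) = c₀ * ζ⁻¹ := by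
    show (↑(c₀ * ζ⁻¹).re + ↑(c₀ * ζ⁻¹).im * I : ℂ) = c₀ * ζ⁻¹
    exact Complex.re_add_im _
  have : zc p - zc u = ↑r * (c₀ * ζ⁻¹) := by
    rw [Tm] at hr
    field_simp at hr ⊢
    linear_combination hr
  show zc p = zc (r • ((c₀ * ζ⁻¹).re, (c₀ * ζ⁻¹).im) + u)
  rw [zc_smul_add', hv]
  linear_combination this

/-- arg of exp for values in the right range -/
lemma arg_exp_of_mem {θ : ℝ} (hθ : θ ∈ Set.Ioc (-Real.pi) Real.pi) :
    (Complex.exp (↑θ * I)).arg = θ := by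
  rw [Complex.exp_mul_I]
  exact_mod_cast Complex.arg_cos_add_sin_mul_I hθ

lemma im_eq_abs_sin (z : ℂ) : z.im = ‖z‖ * Real.sin z.arg := by
  conv_lhs => rw [← Complex.norm_mul_exp_arg_mul_I z]
  rw [Complex.exp_mul_I]
  simp [Complex.mul_im, ← Complex.ofReal_cos, ← Complex.ofReal_sin]

/-! ### Choice of rotation: consecutive arg gaps are < π -/

lemma dichot (hu : u ∈ P) (hcol : ¬ Collinear ℝ (P : Set (ℝ × ℝ))) :
    ∃ ζ : ℂ, ζ ≠ 0 ∧ ∀ x y : ℂ,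
      x ∈ (P.image (Tm u ζ)).erase 0 → y ∈ (P.image (Tm u ζ)).erase 0 →
      x.arg < y.arg →
      (∀ w ∈ (P.image (Tm u ζ)).erase 0, ¬(x.arg < w.arg ∧ w.arg < y.arg)) →
      y.arg - x.arg < Real.pi := by
  by_cases H : ∃ e : ℂ, e ≠ 0 ∧ ∀ p ∈ P, 0 ≤ cr e (zc p - zc u)
  · obtain ⟨e, he0, he⟩ := H
    refine ⟨(starRingEnd ℂ) e, by simpa using he0, fun x y hx hy hxy hcons => ?_⟩
    by_contra hge
    push_neg at hge
    -- all points have nonneg imaginary part, hence arg in [0, π]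
    have him : ∀ z ∈ (P.image (Tm u (starRingEnd ℂ e))).erase 0, 0 ≤ z.im := by
      intro z hz
      rw [Finset.mem_erase, Finset.mem_image] at hz
      obtain ⟨hz0, p, hp, rfl⟩ := hz
      rw [Tm]
      have : ((zc p - zc u) * (starRingEnd ℂ) e).im = cr e (zc p - zc u) := by
        rw [cr, mul_comm]
      rw [this]
      exact he p hp
    have hxarg : 0 ≤ x.arg := Complex.arg_nonneg_iff.2 (him x hx)
    have hyarg : 0 ≤ y.arg := Complex.arg_nonneg_iff.2 (him y hy)
    have hxpi : x.arg ≤ Real.pi := Complex.arg_le_pi x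
    have hypi : y.arg ≤ Real.pi := Complex.arg_le_pi y
    have hx0 : x.arg = 0 := by linarith
    have hyp : y.arg = Real.pi := by linarith
    -- every point is real
    apply hcol
    apply collinear_of_dir (ζ := (starRingEnd ℂ) e) hu (by simpa using he0) 1
    intro p hp
    by_cases hzp : Tm u ((starRingEnd ℂ) e) p = 0
    · exact ⟨0, by simp [hzp]⟩
    · have hmem : Tm u ((starRingEnd ℂ) e) p ∈ (P.image (Tm u ((starRingEnd ℂ) e))).erase 0 := by
        rw [Finset.mem_erase, Finset.mem_image]
        exact ⟨hzp, p, hp, rfl⟩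
      have harg := hcons _ hmem
      have h1 : 0 ≤ (Tm u ((starRingEnd ℂ) e) p).arg := Complex.arg_nonneg_iff.2 (him _ hmem)
      have h2 : (Tm u ((starRingEnd ℂ) e) p).arg ≤ Real.pi := Complex.arg_le_pi _
      have hsin0 : Real.sin (Tm u ((starRingEnd ℂ) e) p).arg = 0 := by
        rcases eq_or_lt_of_le h1 with h | h
        · rw [← h, Real.sin_zero]
        · rcases eq_or_lt_of_le h2 with h' | h'
          · rw [h', Real.sin_pi]
          · exact absurd ⟨by rw [hx0]; exact h, by rw [hyp]; exact h'⟩ harg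
      refine ⟨(Tm u ((starRingEnd ℂ) e) p).re, ?_⟩
      have him0 : (Tm u ((starRingEnd ℂ) e) p).im = 0 := by
        rw [im_eq_abs_sin, hsin0, mul_zero]
      rw [mul_one]
      exact (Complex.ext_iff.2 ⟨by simp, by simp [him0]⟩).symm
  · refine ⟨1, one_ne_zero, fun x y hx hy hxy hcons => ?_⟩
    by_contra hge
    push_neg at hge
    apply H
    refine ⟨Complex.exp (↑y.arg * I), Complex.exp_ne_zero _, fun p hp => ?_⟩
    have hT1 : Tm u 1 p = zc p - zc u := by rw [Tm, mul_one]
    by_cases hzp : zc p - zc u = 0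
    · rw [hzp, cr_zero_right]
    · have hmem : zc p - zc u ∈ (P.image (Tm u 1)).erase 0 := by
        rw [Finset.mem_erase, Finset.mem_image]
        exact ⟨hzp, p, hp, hT1⟩
      set w := zc p - zc u with hw
      have hargw1 : -Real.pi < w.arg := Complex.neg_pi_lt_arg w
      have hargw2 : w.arg ≤ Real.pi := Complex.arg_le_pi w
      have hxb : -Real.pi < x.arg := Complex.neg_pi_lt_arg x
      have hyb : y.arg ≤ Real.pi := Complex.arg_le_pi y
      have hargE : (Complex.exp (↑y.arg * I)).arg = y.arg :=
        arg_exp_of_mem ⟨by linarith, hyb⟩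
      rw [cr_formula, hargE, Complex.norm_exp_ofReal_mul_I, one_mul]
      have hcw := hcons w hmem
      push_neg at hcw
      have habsw : 0 ≤ ‖w‖ := norm_nonneg w
      rcases le_or_gt w.arg x.arg with h | h
      · have hsin : 0 ≤ Real.sin (w.arg - y.arg) := by
          rw [← Real.sin_add_two_pi (w.arg - y.arg)]
          exact Real.sin_nonneg_of_nonneg_of_le_pi (by linarith) (by linarith)
        exact mul_nonneg habsw hsin
      · have h2 : y.arg ≤ w.arg := hcw h
        have hsin : 0 ≤ Real.sin (w.arg - y.arg) :=
          Real.sin_nonneg_of_nonneg_of_le_pi (by linarith) (by linarith)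
        exact mul_nonneg habsw hsin

/-! ### Combinatorics: total domination pattern on a path -/

def patt (n : ℕ) : Finset ℕ :=
  (Finset.range n).filter (fun i => i % 4 = 1 ∨ i % 4 = 2 ∨ i = n - 2)

lemma pattF_card (n : ℕ) :
    ((Finset.range n).filter (fun i => i % 4 = 1 ∨ i % 4 = 2)).card
      = (n + 2) / 4 + (n + 1) / 4 := by
  induction n with
  | zero => simp
  | succ n ih =>
    rw [Finset.range_add_one, Finset.filter_insert]
    by_cases h : n % 4 = 1 ∨ n % 4 = 2
    · rw [if_pos h, Finset.card_insert_of_notMem (by simp), ih]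
      omega
    · rw [if_neg h, ih]
      omega

lemma patt_card (n : ℕ) : (patt n).card ≤ n / 2 + 1 := by
  by_cases h3 : n % 4 = 3
  · have hsub : patt n ⊆ (Finset.range n).filter (fun i => i % 4 = 1 ∨ i % 4 = 2) := by
      intro i hi
      rw [patt, Finset.mem_filter, Finset.mem_range] at hi
      rw [Finset.mem_filter, Finset.mem_range]
      omega
    have := Finset.card_le_card hsub
    rw [pattF_card] at this
    omega
  · have hsub : patt n ⊆ insert (n - 2) ((Finset.range n).filter (fun i => i % 4 = 1 ∨ i % 4 = 2)) := by
      intro i hi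
      rw [patt, Finset.mem_filter, Finset.mem_range] at hi
      rw [Finset.mem_insert, Finset.mem_filter, Finset.mem_range]
      omega
    have h1 := Finset.card_le_card hsub
    have h2 := Finset.card_insert_le (n - 2) ((Finset.range n).filter (fun i => i % 4 = 1 ∨ i % 4 = 2))
    rw [pattF_card] at h2
    omega

lemma patt_nonempty {n : ℕ} (hn : 2 ≤ n) : n - 2 ∈ patt n := by
  rw [patt, Finset.mem_filter, Finset.mem_range]
  omega

lemma patt_dom {n j : ℕ} (hn : 2 ≤ n) (hj : j < n) :
    ∃ j', j' < n ∧ j' ∈ patt n ∧ (j' = j + 1 ∨ j' + 1 = j) := by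
  by_cases hlast : j = n - 1
  · exact ⟨n - 2, by omega, patt_nonempty hn, by omega⟩
  · have hj' : j + 1 < n := by omega
    by_cases h0 : j % 4 = 0
    · exact ⟨j + 1, hj', by rw [patt, Finset.mem_filter, Finset.mem_range]; omega, by omega⟩
    · by_cases h1 : j % 4 = 1
      · exact ⟨j + 1, hj', by rw [patt, Finset.mem_filter, Finset.mem_range]; omega, by omega⟩
      · by_cases h2 : j % 4 = 2
        · exact ⟨j - 1, by omega, by rw [patt, Finset.mem_filter, Finset.mem_range]; omega, by omega⟩
        · exact ⟨j - 1, by omega, by rw [patt, Finset.mem_filter, Finset.mem_range]; omega, by omega⟩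

end Stmt14

open Stmt14 in
theorem stmt_14 (P : Finset (ℝ × ℝ)) (hcol : ¬ Collinear ℝ (P : Set (ℝ × ℝ)))
    (δ : ℕ)
    (hδ : IsLeast {d : ℕ | ∃ v : {x : ℝ × ℝ // x ∈ P}, d = ((PVG P).neighborSet v).ncard} δ) :
    ∃ D : Set {x : ℝ × ℝ // x ∈ P}, D.ncard ≤ δ / 2 + 1 ∧
      ∀ v, v ∈ D ∨ ∃ u ∈ D, (PVG P).Adj u v := by
  classical
  obtain ⟨v0, hv0⟩ := hδ.1
  set u : ℝ × ℝ := v0.1 with hu_def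
  have hu : u ∈ P := v0.2
  obtain ⟨ζ, hζ, hgap⟩ := dichot hu hcol
  set A : Finset ℝ := Aargs P u ζ with hA
  set n : ℕ := A.card with hn
  have hzero : ∀ p : ℝ × ℝ, Tm u ζ p = 0 ↔ p = u := by
    intro p
    constructor
    · intro h; exact Tm_inj hζ (h.trans Tm_self.symm)
    · intro h; rw [h]; exact Tm_self
  have hmem_erase : ∀ p ∈ P, p ≠ u → Tm u ζ p ∈ (P.image (Tm u ζ)).erase 0 := by
    intro p hp hpu
    rw [Finset.mem_erase]
    exact ⟨fun h => hpu ((hzero p).1 h), Finset.mem_image_of_mem _ hp⟩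
  -- n ≥ 2 by noncollinearity
  have hn2 : 2 ≤ n := by
    by_contra h
    push_neg at h
    have hcard : A.card ≤ 1 := by omega
    apply hcol
    by_cases hA0 : A.Nonempty
    · obtain ⟨a, ha⟩ := hA0
      apply collinear_of_dir hu hζ (Complex.exp (↑a * Complex.I))
      intro p hp
      by_cases hpu : p = u
      · exact ⟨0, by rw [hpu, Tm_self]; simp⟩
      · have hm := hmem_erase p hp hpu
        have harg : (Tm u ζ p).arg ∈ A := Finset.mem_image_of_mem _ hm
        have heqa : (Tm u ζ p).arg = a := Finset.card_le_one.1 hcard _ harg _ ha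
        refine ⟨‖Tm u ζ p‖, ?_⟩
        conv_lhs => rw [← Complex.norm_mul_exp_arg_mul_I (Tm u ζ p)]
        rw [heqa]
    · apply collinear_of_dir hu hζ 1
      intro p hp
      by_cases hpu : p = u
      · exact ⟨0, by rw [hpu, Tm_self]; simp⟩
      · exact absurd ⟨_, Finset.mem_image_of_mem Complex.arg (hmem_erase p hp hpu)⟩ hA0
  -- visibility from u characterization helper
  have hvis_iff : ∀ p : ℝ × ℝ, p ∈ P → p ≠ u →
      (Visible P u p ↔ Tm u ζ p = cpt P u ζ ((Tm u ζ p).arg)) := by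
    intro p hp hpu
    exact vis_from_u_iff hζ hu hp (fun h => hpu ((hzero p).1 h))
  -- δ = n
  have hbij : Set.BijOn (fun v : {x : ℝ × ℝ // x ∈ P} => (Tm u ζ v.1).arg)
      ((PVG P).neighborSet v0) ↑A := by
    refine ⟨?_, ?_, ?_⟩
    · intro v hv
      have hvis : Visible P u v.1 := hv
      have hvu : v.1 ≠ u := fun h => hvis.1 h.symm
      exact Finset.mem_coe.2 (Finset.mem_image_of_mem _ (hmem_erase v.1 v.2 hvu))
    · intro v hv v' hv' heq
      have hvis : Visible P u v.1 := hv
      have hvis' : Visible P u v'.1 := hv'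
      have h1 := (hvis_iff v.1 v.2 (fun h => hvis.1 h.symm)).1 hvis
      have h2 := (hvis_iff v'.1 v'.2 (fun h => hvis'.1 h.symm)).1 hvis'
      have heq' : (Tm u ζ v.1).arg = (Tm u ζ v'.1).arg := heq
      apply Subtype.ext
      apply Tm_inj hζ
      rw [h1, h2, heq']
    · intro a ha
      have ha' : a ∈ A := ha
      obtain ⟨hcm, -⟩ := cpt_spec (fib_nonempty_of_mem ha')
      obtain ⟨⟨p, hp, hTp⟩, hc0, hcarg⟩ := mem_fib.1 hcm
      refine ⟨⟨p, hp⟩, ?_, by simpa [hTp] using hcarg⟩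
      show Visible P u p
      rw [hvis_iff p hp (fun h => (by rw [h, Tm_self] at hTp; exact hc0 hTp.symm : False))]
      rw [hTp, hcarg]
  have hδn : δ = n := by
    rw [hv0, ← Set.ncard_image_of_injOn hbij.injOn, hbij.image_eq, Set.ncard_coe_finset]
  -- sorted parametrization of rays
  set oi := A.orderIsoOfFin hn.symm with hoi
  have haI_mem : ∀ i : Fin n, (oi i : ℝ) ∈ A := fun i => (oi i).2
  have haI_lt : ∀ i j : Fin n, i < j → (oi i : ℝ) < (oi j : ℝ) := by
    intro i j h
    exact_mod_cast oi.strictMono h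
  have haI_surj : ∀ a ∈ A, ∃ i : Fin n, (oi i : ℝ) = a := by
    intro a ha
    exact ⟨oi.symm ⟨a, ha⟩, by simp⟩
  -- no ray strictly between consecutive rays
  have hnb : ∀ (i : Fin n) (hi : i.1 + 1 < n), ∀ w ∈ (P.image (Tm u ζ)).erase 0,
      ¬((oi i : ℝ) < w.arg ∧ w.arg < (oi ⟨i.1 + 1, hi⟩ : ℝ)) := by
    rintro i hi w hw ⟨h1, h2⟩
    have hwA : w.arg ∈ A := Finset.mem_image_of_mem _ hw
    obtain ⟨m, hm⟩ := haI_surj _ hwA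
    rw [← hm] at h1 h2
    have hmi : i < m := by
      by_contra hc
      push_neg at hc
      exact absurd h1 (not_lt.2 (by exact_mod_cast oi.monotone hc))
    have hmi2 : m < (⟨i.1 + 1, hi⟩ : Fin n) := by
      by_contra hc
      push_neg at hc
      exact absurd h2 (not_lt.2 (by exact_mod_cast oi.monotone hc))
    have h3 : (i : ℕ) < (m : ℕ) := hmi
    have h4 : (m : ℕ) < i.1 + 1 := hmi2
    omega
  -- gaps between consecutive rays are < π
  have hcons_gap : ∀ (i : Fin n) (hi : i.1 + 1 < n),
      (oi ⟨i.1 + 1, hi⟩ : ℝ) - (oi i : ℝ) < Real.pi := by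
    intro i hi
    obtain ⟨hxm, -⟩ := cpt_spec (fib_nonempty_of_mem (haI_mem i))
    obtain ⟨⟨px, hpx, hTx⟩, hx0, hxarg⟩ := mem_fib.1 hxm
    obtain ⟨hym, -⟩ := cpt_spec (fib_nonempty_of_mem (haI_mem ⟨i.1 + 1, hi⟩))
    obtain ⟨⟨py, hpy, hTy⟩, hy0, hyarg⟩ := mem_fib.1 hym
    have hxe : cpt P u ζ (oi i : ℝ) ∈ (P.image (Tm u ζ)).erase 0 :=
      Finset.mem_erase.2 ⟨hx0, by rw [← hTx]; exact Finset.mem_image_of_mem _ hpx⟩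
    have hye : cpt P u ζ (oi ⟨i.1 + 1, hi⟩ : ℝ) ∈ (P.image (Tm u ζ)).erase 0 :=
      Finset.mem_erase.2 ⟨hy0, by rw [← hTy]; exact Finset.mem_image_of_mem _ hpy⟩
    have := hgap _ _ hxe hye (by rw [hxarg, hyarg]; exact haI_lt i ⟨i.1 + 1, hi⟩ (by exact Nat.lt_succ_self i.1))
      (by rw [hxarg, hyarg]; exact hnb i hi)
    rw [hxarg, hyarg] at this
    exact this
  -- wedge visibility between consecutive rays
  have hwedge : ∀ (i : Fin n) (hi : i.1 + 1 < n) (p q : ℝ × ℝ), p ∈ P → q ∈ P →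
      Tm u ζ p ≠ 0 → Tm u ζ q ≠ 0 → (Tm u ζ p).arg = (oi i : ℝ) →
      (Tm u ζ q).arg = (oi ⟨i.1 + 1, hi⟩ : ℝ) → Visible P p q := by
    intro i hi p q hp hq hp0 hq0 hap haq
    apply wedge hζ hp hq hp0 hq0
    · rw [hap, haq]; exact haI_lt i ⟨i.1 + 1, hi⟩ (by exact Nat.lt_succ_self i.1)
    · rw [hap, haq]; exact hcons_gap i hi
    · intro r hr hr0
      rw [hap, haq]
      exact hnb i hi _ (Finset.mem_erase.2 ⟨hr0, Finset.mem_image_of_mem _ hr⟩)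
  -- chosen representatives
  have hpick : ∀ i : Fin n, ∃ v : {x : ℝ × ℝ // x ∈ P}, Tm u ζ v.1 = cpt P u ζ (oi i : ℝ) := by
    intro i
    obtain ⟨hcm, -⟩ := cpt_spec (fib_nonempty_of_mem (haI_mem i))
    obtain ⟨⟨p, hp, hTp⟩, -, -⟩ := mem_fib.1 hcm
    exact ⟨⟨p, hp⟩, hTp⟩
  choose pick hpick_spec using hpick
  have hpick_ne : ∀ i : Fin n, Tm u ζ (pick i).1 ≠ 0 := by
    intro i
    obtain ⟨hcm, -⟩ := cpt_spec (fib_nonempty_of_mem (haI_mem i))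
    rw [hpick_spec i]
    exact (mem_fib.1 hcm).2.1
  have hpick_arg : ∀ i : Fin n, (Tm u ζ (pick i).1).arg = (oi i : ℝ) := by
    intro i
    obtain ⟨hcm, -⟩ := cpt_spec (fib_nonempty_of_mem (haI_mem i))
    rw [hpick_spec i]
    exact (mem_fib.1 hcm).2.2
  have hpick_vis : ∀ i : Fin n, Visible P u (pick i).1 := by
    intro i
    have hne : (pick i).1 ≠ u := fun h => hpick_ne i (by rw [h]; exact Tm_self)
    rw [hvis_iff _ (pick i).2 hne, hpick_arg i]
    exact hpick_spec i
  -- the dominating set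
  set I : Finset (Fin n) := Finset.univ.filter (fun i => i.1 ∈ patt n) with hI
  refine ⟨↑(I.image pick), ?_, ?_⟩
  · rw [Set.ncard_coe_finset, hδn]
    calc (I.image pick).card ≤ I.card := Finset.card_image_le
    _ ≤ (patt n).card := by
        apply Finset.card_le_card_of_injOn (fun i => i.1)
        · intro i hi
          rw [Finset.mem_coe, hI, Finset.mem_filter] at hi
          exact hi.2
        · intro i _ j _ h
          exact Fin.ext h
    _ ≤ n / 2 + 1 := patt_card n
  · intro v
    right
    by_cases hvu : v.1 = u
    · -- v is the center: dominated by any chosen representative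
      have hidx : (n - 2 : ℕ) < n := by omega
      have hmemI : (⟨n - 2, hidx⟩ : Fin n) ∈ I := by
        rw [hI, Finset.mem_filter]
        exact ⟨Finset.mem_univ _, patt_nonempty hn2⟩
      refine ⟨pick ⟨n - 2, hidx⟩, Finset.mem_coe.2 (Finset.mem_image_of_mem _ hmemI), ?_⟩
      show Visible P (pick ⟨n - 2, hidx⟩).1 v.1
      rw [hvu]
      exact ⟨fun h => (hpick_vis _).1 h.symm, fun r hr hm =>
        (hpick_vis ⟨n - 2, hidx⟩).2 r hr (by rwa [openSegment_symm] at hm)⟩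
    · -- v lies on some ray j; a patt-neighbor of j sees it
      have hve : Tm u ζ v.1 ∈ (P.image (Tm u ζ)).erase 0 := hmem_erase v.1 v.2 hvu
      have hvA : (Tm u ζ v.1).arg ∈ A := Finset.mem_image_of_mem _ hve
      obtain ⟨j, hj⟩ := haI_surj _ hvA
      obtain ⟨j', hj'n, hj'p, hj'adj⟩ := patt_dom hn2 j.isLt
      have hmemI : (⟨j', hj'n⟩ : Fin n) ∈ I := by
        rw [hI, Finset.mem_filter]
        exact ⟨Finset.mem_univ _, hj'p⟩
      refine ⟨pick ⟨j', hj'n⟩, Finset.mem_coe.2 (Finset.mem_image_of_mem _ hmemI), ?_⟩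
      show Visible P (pick ⟨j', hj'n⟩).1 v.1
      have hv0' : Tm u ζ v.1 ≠ 0 := (Finset.mem_erase.1 hve).1
      rcases hj'adj with hcase | hcase
    -- j' = j + 1 : v on ray j, pick on ray j+1, wedge gives Visible v pick, then symm
      · have hi : j.1 + 1 < n := by omega
        have hfe : (⟨j', hj'n⟩ : Fin n) = ⟨j.1 + 1, hi⟩ := Fin.ext (by show j' = j.1 + 1; omega)
        have hvis : Visible P v.1 (pick ⟨j', hj'n⟩).1 := by
          apply hwedge j hi v.1 (pick ⟨j', hj'n⟩).1 v.2 (pick _).2 hv0' (hpick_ne _)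
          · rw [hj]
          · rw [hpick_arg, hfe]
        exact ⟨fun h => hvis.1 h.symm, fun r hr hm => hvis.2 r hr (by rwa [openSegment_symm] at hm)⟩
      · have hi' : (⟨j', hj'n⟩ : Fin n).1 + 1 < n := by
          show j' + 1 < n
          omega
        have hfe : (⟨(⟨j', hj'n⟩ : Fin n).1 + 1, hi'⟩ : Fin n) = j := Fin.ext (by show j' + 1 = (j : ℕ); omega)
        apply hwedge ⟨j', hj'n⟩ hi' (pick ⟨j', hj'n⟩).1 v.1 (pick _).2 v.2 (hpick_ne _) hv0'
        · rw [hpick_arg]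
        · rw [hfe, ← hj]
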